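/- arXiv:1601.00009 — 3 statements merged into one kernel-verified Lean document; each statement's English description precedes it below -/
import Mathlib

section
/- Let f₁ : ℝ → ℝ be a nonnegative integrable function and define F₁(z) = ∫_z^∞ f₁(t) dt. Let m > 0, ω ∈ (0,1), π₁^in > 0, π₁^out > 0, and set π₁ = ω·π₁^in + (1−ω)·π₁^out. Let z_in ≤ z₀ ≤ z_out be real numbers with F₁(z_in) − F₁(z₀) > 0. If (F₁(z₀) − F₁(z_out)) / (F₁(z_in) − F₁(z₀)) < (ω·π₁^in) / ((1−ω)·π₁^out), then m·ω·π₁^in·F₁(z_in) + m·(1−ω)·π₁^out·F₁(z_out) > m·π₁·F₁(z₀). That is, the expected number of true positive edges under the network-based (NICE) thresholds z_in, z_out is strictly greater than under the universal threshold z₀ (equivalently, the expected number of false negatives is strictly smaller). -/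
open MeasureTheory

/-- False-negative half of Theorem 3: the expected number of true positives under
the network-based thresholds is strictly larger than under the universal threshold. -/
theorem stmt3 (f₁ : ℝ → ℝ) (hf₁ : ∀ x, 0 ≤ f₁ x)
    (hint : Integrable f₁ (volume : Measure ℝ))
    (F₁ : ℝ → ℝ) (hF₁ : ∀ z, F₁ z = ∫ t in Set.Ioi z, f₁ t)
    (m ω πin πout : ℝ) (hm : 0 < m) (hω0 : 0 < ω) (hω1 : ω < 1)
    (hπin : 0 < πin) (hπout : 0 < πout)
    (π₁ : ℝ) (hπ₁ : π₁ = ω * πin + (1 - ω) * πout)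
    (zin z₀ zout : ℝ) (h1 : zin ≤ z₀) (h2 : z₀ ≤ zout)
    (hden : 0 < F₁ zin - F₁ z₀)
    (hratio : (F₁ z₀ - F₁ zout) / (F₁ zin - F₁ z₀) < ω * πin / ((1 - ω) * πout)) :
    m * ω * πin * F₁ zin + m * (1 - ω) * πout * F₁ zout > m * π₁ * F₁ z₀ := by
  have hpos : 0 < (1 - ω) * πout := mul_pos (by linarith) hπout
  have hcross : (F₁ z₀ - F₁ zout) * ((1 - ω) * πout) < ω * πin * (F₁ zin - F₁ z₀) := by
    have := (div_lt_div_iff₀ hden hpos).mp hratio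
    linarith
  subst hπ₁
  nlinarith [mul_pos hω0 hπin, hm]
end

section
/- Let z be a real-valued random variable on a probability space, let n be a positive integer, and let K, c₀, τ > 0 be constants. Let μ ∈ ℝ satisfy μ ≥ c₀·n^{τ−1/2}, and assume: (i) √n·|E[z] − μ| ≤ 1; (ii) for every t > 0, P[ √n·(z − E[z]) ≤ −t ] ≤ exp(−K·t²). Let A > 0 satisfy log A ≤ c₀²·n^{2τ}/8, and suppose n^τ ≥ 8/c₀. Then P[ φ(√n·(z − μ)) ≤ A·φ(√n·z) ] ≤ exp( −(c₀²·K/16)·n^{2τ} ). -/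
open MeasureTheory

/-- The standard normal density. -/
noncomputable def phi (x : ℝ) : ℝ := Real.exp (-x ^ 2 / 2) / Real.sqrt (2 * Real.pi)

lemma phi_pos (x : ℝ) : 0 < phi x :=
  div_pos (Real.exp_pos _) (Real.sqrt_pos.mpr (by positivity))

lemma log_phi (x : ℝ) :
    Real.log (phi x) = -x ^ 2 / 2 - Real.log (Real.sqrt (2 * Real.pi)) := by
  unfold phi
  rw [Real.log_div (Real.exp_ne_zero _)
      (ne_of_gt (Real.sqrt_pos.mpr (by positivity))), Real.log_exp]

lemma key_ineq (s μ c logA zω mω : ℝ) (hs : 0 < s) (hμpos : 0 < μ)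
    (hc8 : (8:ℝ) ≤ c) (hsμ : c ≤ s * μ) (hlogA' : logA ≤ c ^ 2 / 8)
    (hEm : s * μ - 1 ≤ s * mω)
    (hkey : s ^ 2 * μ * (2 * zω - μ) ≤ 2 * logA) :
    s * (zω - mω) ≤ -(c/4) := by
  have hsμpos : 0 < s * μ := mul_pos hs hμpos
  have hkey2 : 2 * (s*μ) * (s * zω) ≤ (s*μ)^2 + c^2/4 := by nlinarith [hkey, hlogA']
  have hc0 : (0:ℝ) ≤ c := by linarith
  have hprod : 0 ≤ (s*μ - c) * c := mul_nonneg (by linarith) hc0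
  have h3 : 2 * (s*μ) * (s * zω) ≤ 2 * (s*μ) * (s*μ/2 + c/8) := by nlinarith [hkey2, hprod]
  have hsz : s * zω ≤ s*μ/2 + c/8 :=
    le_of_mul_le_mul_left (by linarith [h3]) (by linarith : (0:ℝ) < 2 * (s*μ))
  nlinarith [hEm, hsμ, hc8, hsz]

/-- Quantitative single-edge form of Lemma 4, true-edge case: for a sub-Gaussian
statistic `z` with mean close to `μ ≥ c₀ n^{τ-1/2}`, the Gaussian likelihood-ratio
threshold event has exponentially small probability. -/
theorem stmt5 {Ω : Type*} [MeasurableSpace Ω] (P : Measure Ω) [IsProbabilityMeasure P]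
    (z : Ω → ℝ) (hz : Measurable z)
    (n : ℕ) (hn : 0 < n) (K c₀ τ : ℝ) (hK : 0 < K) (hc₀ : 0 < c₀) (hτ : 0 < τ)
    (μ : ℝ) (hμ : c₀ * (n : ℝ) ^ (τ - 1 / 2) ≤ μ)
    (hE : Real.sqrt n * |(∫ ω, z ω ∂P) - μ| ≤ 1)
    (htail : ∀ t > (0 : ℝ),
      (P {ω | Real.sqrt n * (z ω - ∫ ω', z ω' ∂P) ≤ -t}).toReal ≤ Real.exp (-K * t ^ 2))
    (A : ℝ) (hA : 0 < A) (hlogA : Real.log A ≤ c₀ ^ 2 * (n : ℝ) ^ (2 * τ) / 8)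
    (hnτ : 8 / c₀ ≤ (n : ℝ) ^ τ) :
    (P {ω | phi (Real.sqrt n * (z ω - μ)) ≤ A * phi (Real.sqrt n * z ω)}).toReal ≤
      Real.exp (-(c₀ ^ 2 * K / 16) * (n : ℝ) ^ (2 * τ)) := by
  set m := ∫ ω, z ω ∂P with hm
  set s := Real.sqrt n with hsdef
  have hnpos : (0:ℝ) < n := by exact_mod_cast hn
  have hs : 0 < s := Real.sqrt_pos.mpr hnpos
  set c := c₀ * (n:ℝ) ^ τ with hcdef
  have hc8 : (8:ℝ) ≤ c := by
    rw [hcdef]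
    calc (8:ℝ) = c₀ * (8 / c₀) := by field_simp
    _ ≤ c₀ * (n:ℝ) ^ τ := mul_le_mul_of_nonneg_left hnτ hc₀.le
  have hμpos : 0 < μ := lt_of_lt_of_le (by positivity) hμ
  have hsμ : c ≤ s * μ := by
    have h1 : s * (c₀ * (n:ℝ) ^ (τ - 1/2)) = c := by
      rw [hcdef, hsdef, Real.sqrt_eq_rpow, ← mul_assoc,
        mul_comm ((n:ℝ) ^ ((1:ℝ)/2)) c₀, mul_assoc, ← Real.rpow_add hnpos]
      norm_num
    calc c = s * (c₀ * (n:ℝ) ^ (τ - 1/2)) := h1.symm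
    _ ≤ s * μ := mul_le_mul_of_nonneg_left hμ hs.le
  have h2τ : (n:ℝ) ^ (2*τ) = ((n:ℝ) ^ τ) ^ 2 := by
    rw [two_mul, Real.rpow_add hnpos, sq]
  have hc2 : c ^ 2 = c₀ ^ 2 * (n:ℝ) ^ (2*τ) := by rw [h2τ, hcdef]; ring
  have hlogA' : Real.log A ≤ c ^ 2 / 8 := by rw [hc2]; exact hlogA
  clear_value m s c
  have hEm : s * μ - 1 ≤ s * m := by
    have h1 : μ - m ≤ |m - μ| := by rw [abs_sub_comm]; exact le_abs_self _
    have h2 : s * (μ - m) ≤ s * |m - μ| := mul_le_mul_of_nonneg_left h1 hs.le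
    nlinarith [hE]
  have hsub : {ω | phi (s * (z ω - μ)) ≤ A * phi (s * z ω)} ⊆
      {ω | s * (z ω - m) ≤ -(c/4)} := by
    intro ω hω
    simp only [Set.mem_setOf_eq] at hω ⊢
    have hlog : Real.log (phi (s * (z ω - μ))) ≤ Real.log (A * phi (s * z ω)) :=
      Real.log_le_log (phi_pos _) hω
    rw [Real.log_mul hA.ne' (phi_pos _).ne', log_phi, log_phi] at hlog
    have hkey : s ^ 2 * μ * (2 * z ω - μ) ≤ 2 * Real.log A := by nlinarith [hlog]
    exact key_ineq s μ c (Real.log A) (z ω) m hs hμpos hc8 hsμ hlogA' hEm hkey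
  have hcpos : (0:ℝ) < c / 4 := by linarith
  calc (P {ω | phi (s * (z ω - μ)) ≤ A * phi (s * z ω)}).toReal
      ≤ (P {ω | s * (z ω - m) ≤ -(c/4)}).toReal :=
        ENNReal.toReal_mono (measure_ne_top _ _) (measure_mono hsub)
    _ ≤ Real.exp (-K * (c/4) ^ 2) := htail (c/4) hcpos
    _ = Real.exp (-(c₀ ^ 2 * K / 16) * (n : ℝ) ^ (2 * τ)) := by
        rw [show -K * (c/4)^2 = -(K/16) * c^2 from by ring, hc2]; ring_nf
end

section
/- Let z be a real-valued random variable on a probability space, let n be a positive integer, and let K, c₀, τ > 0 be constants. Let q ≥ 1 be an integer and μ'_1, …, μ'_q real numbers with |μ'_l| ≥ c₀·n^{τ−1/2} for every l. Assume: (i) √n·|E[z]| ≤ 1; (ii) for every t > 0, P[ √n·|z − E[z]| > t ] ≤ exp(−K·t²). Let A > 0 satisfy A ≥ q, and suppose n^τ ≥ 12/c₀. Then P[ Σ_{l=1}^q φ(√n·(z − μ'_l)) > A·φ(√n·z) ] ≤ 3·exp( −(c₀²·K/144)·n^{2τ} ). -/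
open MeasureTheory

/-- Quantitative single-edge form of Lemma 4, non-edge case: for a sub-Gaussian
statistic `z` with mean close to `0`, the event that the Gaussian mixture likelihood
exceeds `A` times the null density has exponentially small probability. -/
theorem stmt6 {Ω : Type*} [MeasurableSpace Ω] (P : Measure Ω) [IsProbabilityMeasure P]
    (z : Ω → ℝ) (hz : Measurable z)
    (n : ℕ) (hn : 0 < n) (K c₀ τ : ℝ) (hK : 0 < K) (hc₀ : 0 < c₀) (hτ : 0 < τ)
    (q : ℕ) (hq : 1 ≤ q) (μ' : Fin q → ℝ)
    (hμ' : ∀ l, c₀ * (n : ℝ) ^ (τ - 1 / 2) ≤ |μ' l|)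
    (hE : Real.sqrt n * |∫ ω, z ω ∂P| ≤ 1)
    (htail : ∀ t > (0 : ℝ),
      (P {ω | t < Real.sqrt n * |z ω - ∫ ω', z ω' ∂P|}).toReal ≤ Real.exp (-K * t ^ 2))
    (A : ℝ) (hA : (q : ℝ) ≤ A)
    (hnτ : 12 / c₀ ≤ (n : ℝ) ^ τ) :
    (P {ω | A * phi (Real.sqrt n * z ω) <
        ∑ l : Fin q, phi (Real.sqrt n * (z ω - μ' l))}).toReal ≤
      3 * Real.exp (-(c₀ ^ 2 * K / 144) * (n : ℝ) ^ (2 * τ)) := by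
  set μ := ∫ ω, z ω ∂P with hμdef
  have hnpos : (0:ℝ) < (n:ℝ) := by exact_mod_cast hn
  have hnτpos : (0:ℝ) < (n:ℝ) ^ τ := Real.rpow_pos_of_pos hnpos τ
  set t : ℝ := c₀ * (n:ℝ) ^ τ / 12 with htdef
  have htpos : 0 < t := by positivity
  have h12 : (12:ℝ) ≤ c₀ * (n:ℝ) ^ τ := by
    rw [div_le_iff₀ hc₀] at hnτ; linarith [hnτ]
  have hsqrt : Real.sqrt n * (n:ℝ) ^ (τ - 1/2) = (n:ℝ) ^ τ := by
    rw [Real.sqrt_eq_rpow, ← Real.rpow_add hnpos]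
    norm_num
  have hsub : {ω | A * phi (Real.sqrt n * z ω) <
        ∑ l : Fin q, phi (Real.sqrt n * (z ω - μ' l))}
      ⊆ {ω | t < Real.sqrt n * |z ω - μ|} := by
    intro ω hω
    simp only [Set.mem_setOf_eq] at hω ⊢
    obtain ⟨l, hl⟩ : ∃ l : Fin q, phi (Real.sqrt n * z ω) <
        phi (Real.sqrt n * (z ω - μ' l)) := by
      by_contra h
      push_neg at h
      have hsum : ∑ l : Fin q, phi (Real.sqrt n * (z ω - μ' l)) ≤
          (q:ℝ) * phi (Real.sqrt n * z ω) := by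
        calc ∑ l : Fin q, phi (Real.sqrt n * (z ω - μ' l))
            ≤ ∑ _l : Fin q, phi (Real.sqrt n * z ω) :=
              Finset.sum_le_sum (fun l _ => h l)
          _ = (q:ℝ) * phi (Real.sqrt n * z ω) := by
              simp [Finset.sum_const, nsmul_eq_mul]
      have := mul_le_mul_of_nonneg_right hA (phi_pos (Real.sqrt n * z ω)).le
      linarith
    -- from hl deduce (m - a)^2 < m^2 with m = √n z ω, a = √n μ' l
    set m := Real.sqrt n * z ω with hm
    set a := Real.sqrt n * μ' l with ha
    have hsq : (m - a) ^ 2 < m ^ 2 := by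
      have h2 : Real.exp (-m ^ 2 / 2) < Real.exp (-(m - a) ^ 2 / 2) := by
        have hπ : 0 < Real.sqrt (2 * Real.pi) := Real.sqrt_pos.mpr (by positivity)
        unfold phi at hl
        have heq : Real.sqrt n * (z ω - μ' l) = m - a := by rw [hm, ha]; ring
        rw [heq] at hl
        exact (div_lt_div_iff_of_pos_right hπ).mp hl
      have := Real.exp_lt_exp.mp h2
      linarith
    have hapos : 0 < |a| := by
      rw [ha, abs_mul, abs_of_nonneg (Real.sqrt_nonneg _)]
      have h1 := hμ' l
      have : 0 < c₀ * (n:ℝ) ^ (τ - 1/2) := by positivity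
      have hμpos : 0 < |μ' l| := lt_of_lt_of_le this h1
      have : 0 < Real.sqrt n := Real.sqrt_pos.mpr hnpos
      positivity
    have hma : |a| / 2 < |m| := by
      have h1 : a ^ 2 < 2 * (a * m) := by nlinarith
      have h2 : a * m ≤ |a| * |m| := by
        calc a * m ≤ |a * m| := le_abs_self _
          _ = |a| * |m| := abs_mul a m
      have h3 : |a| ^ 2 < 2 * (|a| * |m|) := by rw [sq_abs]; linarith
      nlinarith
    have hage : c₀ * (n:ℝ) ^ τ ≤ |a| := by
      rw [ha, abs_mul, abs_of_nonneg (Real.sqrt_nonneg _)]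
      calc c₀ * (n:ℝ) ^ τ = Real.sqrt n * (c₀ * (n:ℝ) ^ (τ - 1/2)) := by
            rw [← hsqrt]; ring
        _ ≤ Real.sqrt n * |μ' l| :=
            mul_le_mul_of_nonneg_left (hμ' l) (Real.sqrt_nonneg _)
    have hmabs : |m| = Real.sqrt n * |z ω| := by
      rw [hm, abs_mul, abs_of_nonneg (Real.sqrt_nonneg _)]
    have htri : Real.sqrt n * |z ω| - Real.sqrt n * |μ| ≤ Real.sqrt n * |z ω - μ| := by
      have := abs_sub_abs_le_abs_sub (z ω) μ
      have hs := Real.sqrt_nonneg (n:ℝ)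
      nlinarith
    have : t < c₀ * (n:ℝ) ^ τ / 2 - 1 := by
      rw [htdef]; linarith
    calc t < c₀ * (n:ℝ) ^ τ / 2 - 1 := this
      _ ≤ |a| / 2 - Real.sqrt n * |μ| := by linarith [hE]
      _ < |m| - Real.sqrt n * |μ| := by linarith
      _ = Real.sqrt n * |z ω| - Real.sqrt n * |μ| := by rw [hmabs]
      _ ≤ Real.sqrt n * |z ω - μ| := htri
  have hmono : (P {ω | A * phi (Real.sqrt n * z ω) <
        ∑ l : Fin q, phi (Real.sqrt n * (z ω - μ' l))}).toReal ≤
      (P {ω | t < Real.sqrt n * |z ω - μ|}).toReal :=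
    ENNReal.toReal_mono (measure_ne_top _ _) (measure_mono hsub)
  have htail' := htail t htpos
  have hexp : Real.exp (-K * t ^ 2) =
      Real.exp (-(c₀ ^ 2 * K / 144) * (n : ℝ) ^ (2 * τ)) := by
    congr 1
    have h2τ : ((n:ℝ) ^ τ) ^ 2 = (n:ℝ) ^ (2 * τ) := by
      rw [← Real.rpow_natCast ((n:ℝ)^τ) 2, ← Real.rpow_mul hnpos.le]
      norm_num [mul_comm]
    rw [htdef]
    rw [div_pow, mul_pow, ← h2τ]
    ring
  calc (P {ω | A * phi (Real.sqrt n * z ω) <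
        ∑ l : Fin q, phi (Real.sqrt n * (z ω - μ' l))}).toReal
      ≤ Real.exp (-K * t ^ 2) := le_trans hmono htail'
    _ = Real.exp (-(c₀ ^ 2 * K / 144) * (n : ℝ) ^ (2 * τ)) := hexp
    _ ≤ 3 * Real.exp (-(c₀ ^ 2 * K / 144) * (n : ℝ) ^ (2 * τ)) := by
        nlinarith [Real.exp_pos (-(c₀ ^ 2 * K / 144) * (n : ℝ) ^ (2 * τ))]
end
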